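/- For every p ∈ (0,1), the quantity (1/2)·(h_B(p) + (1−p)^4 · ln 2) is a lower bound for the topological entropy of the hard core shift on Z², where h_B(p) = −p ln p − (1−p) ln(1−p). -/

import Mathlib

set_option maxHeartbeats 1000000

/-- A configuration on an `n × n` box of ℤ² is admissible for the hard core
rule if no two nearest-neighbor sites both carry a `1`. -/
def HCAdmissible2 {n : ℕ} (x : Fin n → Fin n → Bool) : Prop :=
  ∀ i j i' j' : Fin n,
    (((i : ℕ) = (i' : ℕ) ∧ (j : ℕ) + 1 = (j' : ℕ)) ∨
     ((i : ℕ) + 1 = (i' : ℕ) ∧ (j : ℕ) = (j' : ℕ))) →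
    ¬(x i j = true ∧ x i' j' = true)

/-- The binary entropy function. -/
noncomputable def hB (p : ℝ) : ℝ := -p * Real.log p - (1 - p) * Real.log (1 - p)

namespace HCAux

variable {n : ℕ}

def Ev (v : Fin n × Fin n) : Prop := ((v.1 : ℕ) + (v.2 : ℕ)) % 2 = 0

instance : DecidablePred (Ev (n := n)) := fun v => by unfold Ev; infer_instance

abbrev ESite (n : ℕ) := {v : Fin n × Fin n // Ev v}
abbrev OSite (n : ℕ) := {v : Fin n × Fin n // ¬ Ev v}

def Adj (v w : Fin n × Fin n) : Prop :=
  ((v.1 : ℕ) = (w.1 : ℕ) ∧ (v.2 : ℕ) + 1 = (w.2 : ℕ)) ∨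
  ((v.1 : ℕ) + 1 = (w.1 : ℕ) ∧ (v.2 : ℕ) = (w.2 : ℕ))

instance : DecidableRel (Adj (n := n)) := fun v w => by unfold Adj; infer_instance

def Nbr (v w : Fin n × Fin n) : Prop := Adj v w ∨ Adj w v

instance : DecidableRel (Nbr (n := n)) := fun v w => by unfold Nbr; infer_instance

lemma Adj.parity {v w : Fin n × Fin n} (h : Adj v w) : Ev v ↔ ¬ Ev w := by
  rcases h with ⟨h1, h2⟩ | ⟨h1, h2⟩ <;> (unfold Ev; omega)

def Free (σ : ESite n → Bool) (w : Fin n × Fin n) : Prop :=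
  ∀ i : ESite n, Nbr w i.1 → σ i = false

instance (σ : ESite n → Bool) : DecidablePred (Free σ) := fun w => by
  unfold Free; infer_instance

def cfg (σ : ESite n → Bool) (τ : {o : OSite n // Free σ o.1} → Bool) :
    Fin n → Fin n → Bool := fun i j =>
  if h : Ev (i, j) then σ ⟨(i, j), h⟩
  else if h2 : Free σ (i, j) then τ ⟨⟨(i, j), h⟩, h2⟩ else false

lemma cfg_admissible (σ : ESite n → Bool) (τ : {o : OSite n // Free σ o.1} → Bool) :
    HCAdmissible2 (cfg σ τ) := by
  intro i j i' j' hadj hx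
  obtain ⟨h1, h2⟩ := hx
  have hA : Adj (i, j) (i', j') := hadj
  by_cases he : Ev (i, j)
  · have ho : ¬ Ev (i', j') := (hA.parity).mp he
    rw [cfg, dif_neg ho] at h2
    by_cases hf : Free σ (i', j')
    · have hz := hf ⟨(i, j), he⟩ (Or.inr hA)
      rw [cfg, dif_pos he] at h1
      rw [h1] at hz; exact Bool.true_eq_false.mp hz
    · rw [dif_neg hf] at h2; exact Bool.false_ne_true h2
  · have ho : Ev (i', j') := by have := hA.parity; tauto
    rw [cfg, dif_neg he] at h1
    by_cases hf : Free σ (i, j)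
    · have hz := hf ⟨(i', j'), ho⟩ (Or.inl hA)
      rw [cfg, dif_pos ho] at h2
      rw [h2] at hz; exact Bool.true_eq_false.mp hz
    · rw [dif_neg hf] at h1; exact Bool.false_ne_true h1

abbrev Pairs (n : ℕ) := Σ σ : ESite n → Bool, ({o : OSite n // Free σ o.1} → Bool)

def Φ (st : Pairs n) : {x : Fin n → Fin n → Bool // HCAdmissible2 x} :=
  ⟨cfg st.1 st.2, cfg_admissible _ _⟩

lemma Φ_injective : Function.Injective (Φ (n := n)) := by
  rintro ⟨σ, τ⟩ ⟨σ', τ'⟩ hx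
  have hc : cfg σ τ = cfg σ' τ' := congrArg Subtype.val hx
  have hσ : σ = σ' := by
    funext i
    have := congrFun (congrFun hc i.1.1) i.1.2
    rw [cfg, cfg] at this
    simpa [i.2] using this
  subst hσ
  have hτ : τ = τ' := by
    funext o
    have := congrFun (congrFun hc o.1.1.1) o.1.1.2
    rw [cfg, cfg] at this
    simpa [o.1.2, o.2] using this
  rw [hτ]

end HCAux

namespace HCAux
variable {n : ℕ}

lemma card_ge :
    ∑ σ : ESite n → Bool, 2 ^ (Fintype.card {o : OSite n // Free σ o.1}) ≤
      Nat.card {x : Fin n → Fin n → Bool // HCAdmissible2 x} := by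
  have h1 : Nat.card (Pairs n) ≤ Nat.card {x : Fin n → Fin n → Bool // HCAdmissible2 x} :=
    Nat.card_le_card_of_injective Φ Φ_injective
  have h2 : Nat.card (Pairs n) = ∑ σ : ESite n → Bool,
      2 ^ (Fintype.card {o : OSite n // Free σ o.1}) := by
    rw [Nat.card_eq_fintype_card, Fintype.card_sigma]
    exact Finset.sum_congr rfl fun σ _ => by rw [Fintype.card_fun, Fintype.card_bool]
  rw [← h2]; exact h1

end HCAux

namespace HCAux

section Expect
variable {ι : Type*} [Fintype ι] [DecidableEq ι] {p : ℝ}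

/-- Bernoulli weight. -/
def wt (p : ℝ) (b : Bool) : ℝ := if b then p else 1 - p

/-- Product Bernoulli weight. -/
def W (p : ℝ) (σ : ι → Bool) : ℝ := ∏ i, wt p (σ i)

lemma wt_pos (hp0 : 0 < p) (hp1 : p < 1) (b : Bool) : 0 < wt p b := by
  cases b <;> simp [wt] <;> linarith

lemma W_pos (hp0 : 0 < p) (hp1 : p < 1) (σ : ι → Bool) : 0 < W p σ :=
  Finset.prod_pos fun i _ => wt_pos hp0 hp1 _

lemma expect_prod (g : ι → Bool → ℝ) :
    ∑ σ : ι → Bool, ∏ i, (wt p (σ i) * g i (σ i)) =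
      ∏ i, (p * g i true + (1 - p) * g i false) := by
  have h := Fintype.prod_sum (fun (i : ι) (b : Bool) => wt p b * g i b)
  rw [← h]
  exact Finset.prod_congr rfl fun i _ => by simp [wt, add_comm]

lemma sum_W : ∑ σ : ι → Bool, W p σ = 1 := by
  have h := expect_prod (p := p) (fun (_ : ι) (_ : Bool) => (1 : ℝ))
  simpa [W] using h

lemma expect_eval (i0 : ι) (φ : Bool → ℝ) :
    ∑ σ : ι → Bool, W p σ * φ (σ i0) = p * φ true + (1 - p) * φ false := by
  have h := expect_prod (p := p) (fun (i : ι) (b : Bool) => if i = i0 then φ b else 1)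
  have hl : ∀ σ : ι → Bool,
      ∏ i, (wt p (σ i) * (if i = i0 then φ (σ i) else 1)) = W p σ * φ (σ i0) := by
    intro σ
    rw [Finset.prod_mul_distrib, Fintype.prod_ite_eq' i0 (fun i => φ (σ i))]
    rfl
  have hr : ∏ i, (p * (if i = i0 then φ true else 1) +
      (1 - p) * (if i = i0 then φ false else 1)) = p * φ true + (1 - p) * φ false := by
    have : ∀ i : ι, (p * (if i = i0 then φ true else 1) +
        (1 - p) * (if i = i0 then φ false else 1)) =
        (if i = i0 then p * φ true + (1 - p) * φ false else 1) := by
      intro i; by_cases hi : i = i0 <;> simp [hi] <;> ring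
    rw [Finset.prod_congr rfl fun i _ => this i,
      Fintype.prod_ite_eq' i0 (fun _ => p * φ true + (1 - p) * φ false)]
  rw [Finset.sum_congr rfl fun σ _ => (hl σ).symm, h, hr]

lemma expect_all_false (J : Finset ι) :
    ∑ σ : ι → Bool, W p σ * (if ∀ i ∈ J, σ i = false then 1 else 0) = (1 - p) ^ J.card := by
  have h := expect_prod (p := p)
    (fun (i : ι) (b : Bool) => if i ∈ J then (if b then 0 else 1) else 1)
  have hl : ∀ σ : ι → Bool,
      ∏ i, (wt p (σ i) * (if i ∈ J then (if σ i then (0:ℝ) else 1) else 1)) =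
        W p σ * (if ∀ i ∈ J, σ i = false then 1 else 0) := by
    intro σ
    rw [Finset.prod_mul_distrib]
    congr 1
    rw [Fintype.prod_ite_mem J (fun i => if σ i then (0:ℝ) else 1)]
    by_cases hall : ∀ i ∈ J, σ i = false
    · rw [if_pos hall]
      exact Finset.prod_eq_one fun i hi => by simp [hall i hi]
    · rw [if_neg hall]
      push_neg at hall
      obtain ⟨i, hi, hne⟩ := hall
      have hit : σ i = true := by revert hne; cases σ i <;> simp
      exact Finset.prod_eq_zero hi (by simp [hit])
  have hr : ∏ i, (p * (if i ∈ J then (if (true:Bool) then (0:ℝ) else 1) else 1) +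
      (1 - p) * (if i ∈ J then (if (false:Bool) then (0:ℝ) else 1) else 1)) =
      (1 - p) ^ J.card := by
    have : ∀ i : ι, (p * (if i ∈ J then (if (true:Bool) then (0:ℝ) else 1) else 1) +
        (1 - p) * (if i ∈ J then (if (false:Bool) then (0:ℝ) else 1) else 1)) =
        (if i ∈ J then (1 - p) else 1) := by
      intro i; by_cases hi : i ∈ J <;> simp [hi] <;> ring
    rw [Finset.prod_congr rfl fun i _ => this i,
      Fintype.prod_ite_mem J (fun _ => (1 - p)), Finset.prod_const]
  rw [Finset.sum_congr rfl fun σ _ => (hl σ).symm, h, hr]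

lemma entropy_sum (hp0 : 0 < p) (hp1 : p < 1) :
    ∑ σ : ι → Bool, W p σ * (-Real.log (W p σ)) = (Fintype.card ι : ℝ) * hB p := by
  have hlog : ∀ σ : ι → Bool, -Real.log (W p σ) = ∑ i, -Real.log (wt p (σ i)) := by
    intro σ
    rw [W, Real.log_prod fun i _ => (wt_pos hp0 hp1 (σ i)).ne']
    rw [← Finset.sum_neg_distrib]
  calc ∑ σ : ι → Bool, W p σ * (-Real.log (W p σ))
      = ∑ σ : ι → Bool, ∑ i, W p σ * (-Real.log (wt p (σ i))) := by
        exact Finset.sum_congr rfl fun σ _ => by rw [hlog σ, Finset.mul_sum]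
    _ = ∑ i : ι, ∑ σ : ι → Bool, W p σ * (-Real.log (wt p (σ i))) := Finset.sum_comm
    _ = ∑ _i : ι, (p * (-Real.log p) + (1 - p) * (-Real.log (1 - p))) := by
        exact Finset.sum_congr rfl fun i _ => by
          simpa [wt] using expect_eval (p := p) i (fun b => -Real.log (wt p b))
    _ = (Fintype.card ι : ℝ) * hB p := by
        rw [Finset.sum_const, Finset.card_univ, nsmul_eq_mul, hB]; ring

lemma log_sum_two_pow_ge (hp0 : 0 < p) (hp1 : p < 1) (f : (ι → Bool) → ℕ) :
    (Fintype.card ι : ℝ) * hB p + Real.log 2 * ∑ σ : ι → Bool, W p σ * (f σ : ℝ) ≤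
      Real.log (∑ σ : ι → Bool, (2 : ℝ) ^ (f σ)) := by
  set g : (ι → Bool) → ℝ := fun σ => (f σ : ℝ) * Real.log 2 - Real.log (W p σ) with hg
  have hWpos : ∀ σ : ι → Bool, 0 < W p σ := W_pos hp0 hp1
  have hexp : ∀ σ : ι → Bool, W p σ * Real.exp (g σ) = 2 ^ (f σ) := by
    intro σ
    rw [hg, Real.exp_sub, Real.exp_log (hWpos σ),
      Real.exp_nat_mul, Real.exp_log (by norm_num : (0:ℝ) < 2)]
    rw [mul_div_assoc', mul_comm, mul_div_assoc, div_self (hWpos σ).ne', mul_one]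
  have jensen := convexOn_exp.map_sum_le (t := Finset.univ) (w := W p) (p := g)
    (fun σ _ => (hWpos σ).le) sum_W (fun σ _ => Set.mem_univ _)
  simp only [smul_eq_mul] at jensen
  have hpos : 0 < ∑ σ : ι → Bool, (2 : ℝ) ^ (f σ) := by
    apply Finset.sum_pos (fun σ _ => by positivity)
    exact ⟨fun _ => false, Finset.mem_univ _⟩
  rw [Real.le_log_iff_exp_le hpos]
  have hsum : ∑ σ : ι → Bool, W p σ * g σ =
      Real.log 2 * (∑ σ : ι → Bool, W p σ * (f σ : ℝ)) + (Fintype.card ι : ℝ) * hB p := by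
    rw [← entropy_sum (p := p) hp0 hp1, Finset.mul_sum, ← Finset.sum_add_distrib]
    exact Finset.sum_congr rfl fun σ _ => by rw [hg]; ring
  calc Real.exp ((Fintype.card ι : ℝ) * hB p +
        Real.log 2 * ∑ σ : ι → Bool, W p σ * (f σ : ℝ))
      = Real.exp (∑ σ : ι → Bool, W p σ * g σ) := by rw [hsum]; ring_nf
    _ ≤ ∑ σ : ι → Bool, W p σ * Real.exp (g σ) := jensen
    _ = ∑ σ : ι → Bool, (2 : ℝ) ^ (f σ) :=
        Finset.sum_congr rfl fun σ _ => hexp σ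

end Expect
end HCAux

namespace HCAux
variable {n : ℕ} {p : ℝ}

def Nb (o : OSite n) : Finset (ESite n) := Finset.univ.filter fun i => Nbr o.1 i.1

lemma free_iff (σ : ESite n → Bool) (o : OSite n) :
    Free σ o.1 ↔ ∀ i ∈ Nb o, σ i = false := by
  simp [Free, Nb]

lemma card_Nb_le (o : OSite n) : (Nb o).card ≤ 4 := by
  classical
  set a := (o.1.1 : ℕ) with ha; set b := (o.1.2 : ℕ) with hb
  set T : Finset (ℕ × ℕ) := {(a, b+1), (a+1, b), (a, b-1), (a-1, b)} with hT
  have hsub : ∀ i ∈ Nb o, ((i.1.1 : ℕ), (i.1.2 : ℕ)) ∈ T := by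
    intro i hi
    simp only [Nb, Finset.mem_filter, Finset.mem_univ, true_and] at hi
    rcases hi with (⟨h1, h2⟩ | ⟨h1, h2⟩) | (⟨h1, h2⟩ | ⟨h1, h2⟩) <;>
      simp only [hT, Finset.mem_insert, Finset.mem_singleton, Prod.mk.injEq] <;> omega
  have hinj : (↑(Nb o) : Set (ESite n)).InjOn fun i => ((i.1.1 : ℕ), (i.1.2 : ℕ)) := by
    intro i _ j _ hij
    simp only [Prod.mk.injEq] at hij
    exact Subtype.ext (Prod.ext (Fin.ext hij.1) (Fin.ext hij.2))
  have hc := Finset.card_le_card_of_injOn _ hsub hinj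
  have h4 : T.card ≤ 4 := by
    have c1 := Finset.card_insert_le (a, b+1)
      ({(a+1, b), (a, b-1), (a-1, b)} : Finset (ℕ × ℕ))
    have c2 := Finset.card_insert_le (a+1, b) ({(a, b-1), (a-1, b)} : Finset (ℕ × ℕ))
    have c3 := Finset.card_insert_le (a, b-1) ({(a-1, b)} : Finset (ℕ × ℕ))
    have c4 : ({(a-1, b)} : Finset (ℕ × ℕ)).card = 1 := Finset.card_singleton _
    simp only [hT]
    omega
  omega

lemma expect_free_ge (hp0 : 0 < p) (hp1 : p < 1) :
    ((Fintype.card (OSite n)) : ℝ) * (1 - p) ^ 4 ≤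
      ∑ σ : ESite n → Bool, W p σ * (Fintype.card {o : OSite n // Free σ o.1} : ℝ) := by
  classical
  have hcard : ∀ σ : ESite n → Bool,
      (Fintype.card {o : OSite n // Free σ o.1} : ℝ) =
        ∑ o : OSite n, (if Free σ o.1 then (1 : ℝ) else 0) := by
    intro σ; simp [Fintype.card_subtype]
  calc ((Fintype.card (OSite n)) : ℝ) * (1 - p) ^ 4
      = ∑ _o : OSite n, (1 - p) ^ 4 := by
        rw [Finset.sum_const, Finset.card_univ, nsmul_eq_mul]
    _ ≤ ∑ o : OSite n, (1 - p) ^ (Nb o).card := by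
        apply Finset.sum_le_sum
        intro o _
        exact pow_le_pow_of_le_one (by linarith) (by linarith) (card_Nb_le o)
    _ = ∑ o : OSite n, ∑ σ : ESite n → Bool,
          W p σ * (if Free σ o.1 then (1 : ℝ) else 0) := by
        apply Finset.sum_congr rfl
        intro o _
        rw [← expect_all_false (p := p) (Nb o)]
        apply Finset.sum_congr rfl
        intro σ _
        congr 1
        simp only [free_iff]
    _ = ∑ σ : ESite n → Bool,
          W p σ * (Fintype.card {o : OSite n // Free σ o.1} : ℝ) := by
        rw [Finset.sum_comm]
        apply Finset.sum_congr rfl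
        intro σ _
        rw [hcard σ, Finset.mul_sum]

lemma log_card_ge (hp0 : 0 < p) (hp1 : p < 1) :
    (Fintype.card (ESite n) : ℝ) * hB p +
      Real.log 2 * ((Fintype.card (OSite n) : ℝ) * (1 - p) ^ 4) ≤
      Real.log (Nat.card {x : Fin n → Fin n → Bool // HCAdmissible2 x}) := by
  classical
  have h1 := log_sum_two_pow_ge (ι := ESite n) hp0 hp1
    (fun σ => Fintype.card {o : OSite n // Free σ o.1})
  have h2 := expect_free_ge (n := n) hp0 hp1
  have hlog2 : (0 : ℝ) ≤ Real.log 2 := Real.log_nonneg one_le_two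
  have h2' := mul_le_mul_of_nonneg_left h2 hlog2
  have hpos : (0 : ℝ) < ∑ σ : ESite n → Bool,
      (2 : ℝ) ^ (Fintype.card {o : OSite n // Free σ o.1}) := by
    apply Finset.sum_pos (fun σ _ => by positivity)
    exact ⟨fun _ => false, Finset.mem_univ _⟩
  have h3 : (∑ σ : ESite n → Bool,
      (2 : ℝ) ^ (Fintype.card {o : OSite n // Free σ o.1})) ≤
      (Nat.card {x : Fin n → Fin n → Bool // HCAdmissible2 x} : ℝ) := by
    have := card_ge (n := n)
    calc (∑ σ : ESite n → Bool, (2 : ℝ) ^ (Fintype.card {o : OSite n // Free σ o.1}))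
        = ((∑ σ : ESite n → Bool,
            2 ^ (Fintype.card {o : OSite n // Free σ o.1}) : ℕ) : ℝ) := by push_cast; rfl
      _ ≤ _ := Nat.cast_le.mpr this
  have h4 := Real.log_le_log hpos h3
  linarith

end HCAux

namespace HCAux
variable {n : ℕ}

lemma card_sites : Fintype.card (ESite n) + Fintype.card (OSite n) = n ^ 2 := by
  rw [Fintype.card_subtype, Fintype.card_subtype]
  rw [Finset.card_filter_add_card_filter_not]
  rw [Finset.card_univ, Fintype.card_prod, Fintype.card_fin, sq]

lemma card_even_eq_odd (hn2 : n % 2 = 0) (hn0 : 0 < n) :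
    Fintype.card (ESite n) = Fintype.card (OSite n) := by
  haveI : NeZero n := ⟨hn0.ne'⟩
  apply Fintype.card_congr
  refine Equiv.subtypeEquiv ((Equiv.refl (Fin n)).prodCongr (Equiv.addRight (1 : Fin n))) ?_
  intro v
  have hval : ((v.2 + 1 : Fin n) : ℕ) % 2 = ((v.2 : ℕ) + 1) % 2 := by
    rw [Fin.val_add]
    have h1 : ((1 : Fin n) : ℕ) = 1 % n := rfl
    have hdvd : ((v.2 : ℕ) + ((1 : Fin n) : ℕ)) % n % 2 = ((v.2 : ℕ) + ((1:Fin n):ℕ)) % 2 :=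
      Nat.mod_mod_of_dvd _ ⟨n / 2, by omega⟩
    have hn2' : 2 ≤ n := by omega
    rw [hdvd, h1, Nat.mod_eq_of_lt hn2']
  simp only [Equiv.prodCongr_apply, Equiv.coe_refl, Prod.map]
  unfold Ev
  simp only [Equiv.coe_addRight, id_eq]
  omega

end HCAux

/-- For every `p ∈ (0,1)`, `(1/2)(h_B(p) + (1-p)^4 ln 2)` is a lower bound for
the topological entropy of the hard core shift on ℤ². -/
theorem hard_core_entropy_Z2_lower_bound (h : ℝ)
    (hh : Filter.Tendsto
      (fun n : ℕ =>
        (1 / (n : ℝ) ^ 2) *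
          Real.log (Nat.card {x : Fin n → Fin n → Bool // HCAdmissible2 x}))
      Filter.atTop (nhds h)) :
    ∀ p ∈ Set.Ioo (0 : ℝ) 1, (1 / 2) * (hB p + (1 - p) ^ 4 * Real.log 2) ≤ h := by
  intro p hp
  obtain ⟨hp0, hp1⟩ := hp
  have key : ∀ m : ℕ, 1 ≤ m →
      (1 / 2) * (hB p + (1 - p) ^ 4 * Real.log 2) ≤
        (1 / ((2 * m : ℕ) : ℝ) ^ 2) *
          Real.log (Nat.card
            {x : Fin (2 * m) → Fin (2 * m) → Bool // HCAdmissible2 x}) := by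
    intro m hm
    set n := 2 * m with hn
    have hn0 : 0 < n := by omega
    have hc1 := HCAux.card_sites (n := n)
    have hc2 := HCAux.card_even_eq_odd (n := n) (by omega) hn0
    have hlog := HCAux.log_card_ge (n := n) hp0 hp1
    have h2E : 2 * Fintype.card (HCAux.ESite n) = n ^ 2 := by omega
    have h2O : 2 * Fintype.card (HCAux.OSite n) = n ^ 2 := by omega
    have hcE : (Fintype.card (HCAux.ESite n) : ℝ) = (n : ℝ) ^ 2 / 2 := by
      have := congrArg (fun k : ℕ => (k : ℝ)) h2E
      push_cast at this
      linarith
    have hcO : (Fintype.card (HCAux.OSite n) : ℝ) = (n : ℝ) ^ 2 / 2 := by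
      have := congrArg (fun k : ℕ => (k : ℝ)) h2O
      push_cast at this
      linarith
    rw [hcE, hcO] at hlog
    have hnpos : (0 : ℝ) < (n : ℝ) ^ 2 := by positivity
    have hrw : (n : ℝ) ^ 2 / 2 * hB p + Real.log 2 * ((n : ℝ) ^ 2 / 2 * (1 - p) ^ 4) =
        (n : ℝ) ^ 2 * ((1 / 2) * (hB p + (1 - p) ^ 4 * Real.log 2)) := by ring
    rw [hrw] at hlog
    calc (1 / 2) * (hB p + (1 - p) ^ 4 * Real.log 2)
        = (1 / ((n : ℕ) : ℝ) ^ 2) *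
            ((n : ℝ) ^ 2 * ((1 / 2) * (hB p + (1 - p) ^ 4 * Real.log 2))) := by
          field_simp
      _ ≤ (1 / ((n : ℕ) : ℝ) ^ 2) *
            Real.log (Nat.card {x : Fin n → Fin n → Bool // HCAdmissible2 x}) := by
          apply mul_le_mul_of_nonneg_left hlog
          positivity
  have htwo : Filter.Tendsto (fun m : ℕ => 2 * m) Filter.atTop Filter.atTop :=
    Filter.tendsto_atTop_mono (fun m => by simp only [id_eq]; omega) Filter.tendsto_id
  exact ge_of_tendsto (hh.comp htwo) (Filter.eventually_atTop.mpr ⟨1, fun m hm => key m hm⟩)
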